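/- Let f : X → ℝ∪{+∞} with ∂f maximal monotone, and let g : X → ℝ∪{+∞} satisfy g = f on D(∂f) and g ≥ f everywhere. Then ∂g = ∂f, and in particular ∂g is maximal monotone. -/

import Mathlib

open scoped Topology

section Defs

variable {X : Type*} [AddCommGroup X] [Module ℝ X] [TopologicalSpace X]

/-- `p ∈ ∂f(x)`: `f x` is finite and `f y ≥ f x + ⟨y - x, p⟩` for all `y`. -/
def IsSubgrad (f : X → EReal) (x : X) (p : X →L[ℝ] ℝ) : Prop :=
  f x ≠ ⊤ ∧ f x ≠ ⊥ ∧ ∀ y, f x + (p (y - x) : EReal) ≤ f y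

/-- Graph of the convex subdifferential of `f`. -/
def graphSub (f : X → EReal) : Set (X × (X →L[ℝ] ℝ)) :=
  {q | IsSubgrad f q.1 q.2}

/-- Domain `D(∂f)` of the subdifferential. -/
def subdiffDom (f : X → EReal) : Set X := {x | ∃ p, IsSubgrad f x p}

/-- Range `R(∂f)` of the subdifferential. -/
def subdiffRan (f : X → EReal) : Set (X →L[ℝ] ℝ) := {p | ∃ x, IsSubgrad f x p}

/-- Monotone subset of `X × X*`. -/
def MonotoneSet (S : Set (X × (X →L[ℝ] ℝ))) : Prop :=
  ∀ a ∈ S, ∀ b ∈ S, 0 ≤ a.2 (a.1 - b.1) - b.2 (a.1 - b.1)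

/-- Maximal monotone subset of `X × X*` (maximal w.r.t. graph inclusion). -/
def MaxMonotoneSet (S : Set (X × (X →L[ℝ] ℝ))) : Prop :=
  MonotoneSet S ∧ ∀ T, MonotoneSet T → S ⊆ T → T = S

/-- Proper function: never `−∞` and not identically `+∞`. -/
def ProperE {Y : Type*} (f : Y → EReal) : Prop :=
  (∃ x, f x ≠ ⊤) ∧ ∀ x, f x ≠ ⊥

/-- Convexity of an extended-real-valued function via its epigraph. -/
def ConvexEpi (f : X → EReal) : Prop :=
  Convex ℝ {q : X × ℝ | f q.1 ≤ (q.2 : EReal)}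

/-- The lsc convex hull: the greatest lsc convex function majorized by `f`. -/
noncomputable def lscConvHull (f : X → EReal) : X → EReal := fun x =>
  sSup {v | ∃ g : X → EReal, ConvexEpi g ∧ LowerSemicontinuous g ∧ g ≤ f ∧ v = g x}

/-- Convex conjugate w.r.t. the dual system `(X, X*)`. -/
noncomputable def conjE (f : X → EReal) (p : X →L[ℝ] ℝ) : EReal :=
  ⨆ x, ((p x : EReal) - f x)

/-- Biconjugate `f**`. -/
noncomputable def biconjE (f : X → EReal) (x : X) : EReal :=
  ⨆ p : X →L[ℝ] ℝ, ((p x : EReal) - conjE f p)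

/-- Fitzpatrick function of `∂f`. -/
noncomputable def fitzSub (f : X → EReal) (x : X) (p : X →L[ℝ] ℝ) : EReal :=
  ⨆ a, ⨆ s, ⨆ _ : IsSubgrad f a s, ((s (x - a) + p a : ℝ) : EReal)

/-- Upper envelope `f^∪(x) = sup{⟨x−a, a*⟩ + f(a) : (a,a*) ∈ Graph ∂f}`. -/
noncomputable def upperEnv (f : X → EReal) (x : X) : EReal :=
  ⨆ a, ⨆ s, ⨆ _ : IsSubgrad f a s, ((s (x - a) : EReal) + f a)

end Defs

lemma graphSub_monotone {X : Type*} [AddCommGroup X] [Module ℝ X] [TopologicalSpace X]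
    (f : X → EReal) : MonotoneSet (graphSub f) := by
  rintro ⟨a, p⟩ ⟨hat, hab, ha⟩ ⟨b, q⟩ ⟨hbt, hbb, hb⟩
  obtain ⟨A, hA⟩ : ∃ A : ℝ, f a = (A : EReal) := ⟨(f a).toReal, (EReal.coe_toReal hat hab).symm⟩
  obtain ⟨B, hB⟩ : ∃ B : ℝ, f b = (B : EReal) := ⟨(f b).toReal, (EReal.coe_toReal hbt hbb).symm⟩
  have h1 := ha b
  have h2 := hb a
  rw [hA, hB, ← EReal.coe_add, EReal.coe_le_coe_iff] at h1
  rw [hA, hB, ← EReal.coe_add, EReal.coe_le_coe_iff] at h2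
  simp only
  have e1 : p (a - b) = - p (b - a) := by rw [← map_neg]; congr 1; abel
  have e2 : (q (a - b) : ℝ) = q (a - b) := rfl
  linarith [e1]

theorem increase_off_domain_keeps_subdiff {X : Type*} [AddCommGroup X] [Module ℝ X] [TopologicalSpace X]
    [IsTopologicalAddGroup X] [ContinuousSMul ℝ X] [LocallyConvexSpace ℝ X] [T2Space X]
    (f g : X → EReal) (hbf : ∀ x, f x ≠ ⊥) (hbg : ∀ x, g x ≠ ⊥)
    (hmax : MaxMonotoneSet (graphSub f))
    (heq : ∀ x ∈ subdiffDom f, g x = f x)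
    (hge : ∀ x, f x ≤ g x) :
    graphSub g = graphSub f ∧ MaxMonotoneSet (graphSub g) := by
  have hsub : graphSub f ⊆ graphSub g := by
    rintro ⟨x, p⟩ ⟨hxt, hxb, hx⟩
    have hxd : x ∈ subdiffDom f := ⟨p, hxt, hxb, hx⟩
    have hgx := heq x hxd
    refine ⟨by rw [hgx]; exact hxt, hbg x, fun y => ?_⟩
    rw [hgx]
    exact (hx y).trans (hge y)
  have hEq : graphSub g = graphSub f := hmax.2 _ (graphSub_monotone g) hsub
  exact ⟨hEq, hEq ▸ hmax⟩
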